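/- arXiv:1212.2948 — 2 statements merged into one kernel-verified Lean document; each statement's English description precedes it below -/
import Mathlib

section
/- Let q be a positive integer with D | q, let a be an integer with gcd(a, q) = 1, and let a* be an integer with a·a* ≡ 1 (mod q). Then for every complex number w with Re w > 0 one has f(a/q + i w) = conj(χ(a))·(−i q w)^{−k}·f(−a*/q + i/(q² w)). -/
open Complex Filter MeasureTheory ComplexConjugate

noncomputable section

/-- Normalized coefficients `r n = a n * n^((1-k)/2)`. -/
def rcoef (k : ℕ) (a : ℕ → ℂ) (n : ℕ) : ℂ :=
  a n * (((n : ℝ) ^ ((1 - (k : ℝ)) / 2)) : ℝ)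

/-- A nonzero holomorphic cusp form of integral weight `k ≥ 1` for `Γ₀(D)` with
character `χ` mod `D`, which is a normalized eigenfunction of all Hecke operators,
together with the Deligne bound `|r n| ≤ τ n` for its normalized coefficients. -/
structure CuspFormData where
  k : ℕ
  D : ℕ
  hk : 1 ≤ k
  hD : 1 ≤ D
  χ : DirichletCharacter ℂ D
  f : ℂ → ℂ
  a : ℕ → ℂ
  f_nonzero : ∃ z : ℂ, 0 < z.im ∧ f z ≠ 0
  f_hol : DifferentiableOn ℂ f {z : ℂ | 0 < z.im}
  f_exp : ∀ z : ℂ, 0 < z.im →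
    HasSum (fun n : ℕ => a (n + 1) * Complex.exp (2 * Real.pi * I * ((n + 1 : ℕ) : ℂ) * z)) (f z)
  f_modular : ∀ A B C d : ℤ, A * d - B * C = 1 → (D : ℤ) ∣ C → ∀ z : ℂ, 0 < z.im →
    f (((A : ℂ) * z + B) / ((C : ℂ) * z + d)) = χ (d : ZMod D) * ((C : ℂ) * z + d) ^ k * f z
  f_cusp : ∀ A B C d : ℤ, A * d - B * C = 1 →
    Tendsto (fun y : ℝ => (((C : ℂ) * (y : ℂ) * I + (d : ℂ)) ^ k)⁻¹ *
      f (((A : ℂ) * (y : ℂ) * I + (B : ℂ)) / ((C : ℂ) * (y : ℂ) * I + (d : ℂ)))) atTop (nhds 0)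
  hecke_eigen : ∀ n : ℕ, 1 ≤ n → ∀ z : ℂ, 0 < z.im →
    (1 / (n : ℂ)) * ∑ d ∈ n.divisors, χ ((n / d : ℕ) : ZMod D) * ((n / d : ℕ) : ℂ) ^ k *
      ∑ b ∈ Finset.range d, f ((((n / d : ℕ) : ℂ) * z + (b : ℂ)) / (d : ℂ)) = a n * f z
  a_one : a 1 = 1
  ramanujan : ∀ n : ℕ, 1 ≤ n → ‖rcoef k a n‖ ≤ (n.divisors.card : ℝ)

/-- relation (9). For `D ∣ q`, `(a, q) = 1`, `a a* ≡ 1 (mod q)` and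
`Re w > 0`: `f(a/q + iw) = conj(χ(a)) (-iqw)^{-k} f(-a*/q + i/(q²w))`. -/
theorem modular_relation_at_cusp (F : CuspFormData) (q : ℕ) (hq : 0 < q) (hDq : F.D ∣ q)
    (a₀ astar : ℤ) (ha : Int.gcd a₀ (q : ℤ) = 1)
    (hstar : a₀ * astar ≡ 1 [ZMOD (q : ℤ)]) :
    ∀ w : ℂ, 0 < w.re →
      F.f ((a₀ : ℂ) / (q : ℂ) + I * w) =
        conj (F.χ ((a₀ : ℤ) : ZMod F.D)) * (-I * (q : ℂ) * w) ^ (-(F.k : ℤ)) *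
          F.f (-(astar : ℂ) / (q : ℂ) + I / ((q : ℂ) ^ 2 * w)) := by
  intro w hw
  have hw0 : w ≠ 0 := fun h => by simp [h] at hw
  have hq0 : ((q:ℂ)) ≠ 0 := Nat.cast_ne_zero.mpr hq.ne'
  set z₂ : ℂ := -(astar : ℂ) / q + I / ((q:ℂ)^2 * w) with hz₂
  have hz₂im : 0 < z₂.im := by
    have h1 : z₂.im = (((q:ℂ)^2 * w)⁻¹).re := by
      simp [hz₂, div_eq_mul_inv, Complex.add_im, Complex.mul_im, Complex.inv_im,
        Complex.I_re, Complex.I_im]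
    rw [h1, Complex.inv_re]
    have hre : ((q:ℂ)^2 * w).re = (q:ℝ)^2 * w.re := by
      have : ((q:ℂ)^2 : ℂ) = (((q:ℝ)^2 : ℝ) : ℂ) := by push_cast; ring
      rw [this, Complex.re_ofReal_mul]
    rw [hre]
    have hqR : ((q:ℝ)) ≠ 0 := Nat.cast_ne_zero.mpr hq.ne'
    have hns : 0 < Complex.normSq ((q:ℂ)^2 * w) := by
      apply Complex.normSq_pos.mpr
      exact mul_ne_zero (pow_ne_zero 2 hq0) hw0
    positivity
  obtain ⟨b, hb⟩ := Int.ModEq.dvd hstar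
  have hdet : a₀ * astar - (-b) * (q:ℤ) = 1 := by linarith
  have hDq' : (F.D : ℤ) ∣ (q : ℤ) := Int.natCast_dvd_natCast.mpr hDq
  have hmod := F.f_modular a₀ (-b) (q:ℤ) astar hdet hDq' z₂ hz₂im
  push_cast at hmod
  have hden : (q:ℂ) * z₂ + (astar : ℂ) = I / ((q:ℂ) * w) := by
    rw [hz₂]; field_simp; ring
  have hbC : (1 : ℂ) - (a₀:ℂ) * astar = (q:ℂ) * b := by exact_mod_cast congrArg (Int.cast : ℤ → ℂ) hb
  have harg : ((a₀ : ℂ) * z₂ + ((-b : ℤ) : ℂ)) / ((q:ℂ) * z₂ + (astar : ℂ))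
      = (a₀ : ℂ) / q + I * w := by
    rw [hden, hz₂]
    rw [div_eq_iff (by
      apply div_ne_zero I_ne_zero (mul_ne_zero hq0 hw0))]
    push_cast
    field_simp
    linear_combination ((q:ℂ)*w) * hbC - ((q:ℂ)*w) * Complex.I_sq
  push_cast at harg
  rw [harg, hden] at hmod
  rw [hmod]
  have hχ : F.χ ((astar : ℤ) : ZMod F.D) = conj (F.χ ((a₀ : ℤ) : ZMod F.D)) := by
    have hDmod : a₀ * astar ≡ 1 [ZMOD (F.D : ℤ)] := hstar.of_dvd hDq'
    have hZ : ((a₀ : ZMod F.D) * (astar : ZMod F.D)) = 1 := by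
      have := (ZMod.intCast_eq_intCast_iff (a₀*astar) 1 F.D).mpr hDmod
      push_cast at this
      simpa using this
    have hmul : F.χ ((a₀ : ℤ) : ZMod F.D) * F.χ ((astar : ℤ) : ZMod F.D) = 1 := by
      rw [← map_mul, hZ, map_one]
    have hunit : IsUnit ((a₀ : ℤ) : ZMod F.D) := IsUnit.of_mul_eq_one _ hZ
    have hnorm : ‖F.χ ((a₀ : ℤ) : ZMod F.D)‖ = 1 := by
      rw [← hunit.unit_spec]
      exact F.χ.unit_norm_eq_one hunit.unit
    rw [← Complex.inv_eq_conj hnorm]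
    exact (inv_eq_of_mul_eq_one_right hmul).symm
  have hpow : (I / ((q:ℂ) * w)) ^ F.k = (-I * (q : ℂ) * w) ^ (-(F.k : ℤ)) := by
    rw [zpow_neg, zpow_natCast, ← inv_pow]
    congr 1
    rw [eq_comm, inv_eq_iff_eq_inv, eq_comm, inv_div, div_eq_iff I_ne_zero]
    ring_nf
    rw [I_sq]; ring
  rw [hχ, hpow]
end
end

section
/- For every positive integer m all of whose prime factors exceed 256, the function s ↦ K(m, s) is analytic in the half-plane Re s ≥ 1/2 and satisfies |K(m, s)| ≤ τ₆(m) there, where τ₆(m) = ∑_{n₁n₂n₃n₄n₅n₆ = m} 1 is the 6-fold divisor function. -/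
open Complex Filter MeasureTheory ComplexConjugate

noncomputable section

/-- The multiplicative factor
`K(m,s) = ∏_{p ∣ m} (∑_j |r(p^j)|² p^{-js})⁻¹ ∏_{p^α ∥ m} (∑_j conj(r(p^{α+j})) r(p^j) p^{-js})`. -/
def Kfun (r : ℕ → ℂ) (m : ℕ) (s : ℂ) : ℂ :=
  (∏ p ∈ m.primeFactors,
      (∑' j : ℕ, ((‖r (p ^ j)‖ ^ 2 : ℝ) : ℂ) / (p : ℂ) ^ ((j : ℂ) * s))⁻¹) *
  ∏ p ∈ m.primeFactors,
      ∑' j : ℕ, conj (r (p ^ (m.factorization p + j))) * r (p ^ j) / (p : ℂ) ^ ((j : ℂ) * s)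

/-- `K̄(m,s) = conj (K(m, conj s))`. -/
def Kbar (r : ℕ → ℂ) (m : ℕ) (s : ℂ) : ℂ := conj (Kfun r m (conj s))

/-- The 6-fold divisor function `τ₆(m) = #{(n₁,…,n₆) : n₁⋯n₆ = m}`. -/
def tau6 (m : ℕ) : ℕ := Nat.card {t : Fin 6 → ℕ // ∏ i, t i = m}


/-! ### Auxiliary lemmas -/

section Aux
open Finset

lemma norm_p_cpow {p : ℕ} (hp : 0 < p) (j : ℕ) (z : ℂ) :
    ‖((p : ℂ)) ^ ((j : ℂ) * z)‖ = ((p : ℝ) ^ z.re) ^ j := by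
  have h : ((p : ℂ)) = (((p : ℝ)) : ℂ) := by norm_cast
  have hp' : (0:ℝ) < p := by exact_mod_cast hp
  rw [h, Complex.norm_cpow_eq_rpow_re_of_pos hp']
  have : ((j : ℂ) * z).re = (j : ℝ) * z.re := by
    simp [Complex.mul_re]
  rw [this, mul_comm, Real.rpow_mul hp'.le, Real.rpow_natCast]

lemma base_ge {p : ℕ} (hp : 257 ≤ p) {a : ℝ} {n : ℕ} (ha : 0 ≤ a) (han : a ^ n ≤ 257)
    (hn : 0 < n) {t : ℝ} (ht : 1 / (n : ℝ) ≤ t) : a ≤ (p : ℝ) ^ t := by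
  have hp1 : (1:ℝ) ≤ (p:ℝ) := by
    have : (257:ℝ) ≤ p := by exact_mod_cast hp
    linarith
  have h1 : a ≤ (p : ℝ) ^ (1 / (n:ℝ)) := by
    have h2 : a = (a ^ n) ^ (1 / (n:ℝ)) := by
      rw [← Real.rpow_natCast a n, ← Real.rpow_mul ha]
      rw [mul_one_div, div_self (by positivity), Real.rpow_one]
    rw [h2]
    apply Real.rpow_le_rpow (by positivity) (le_trans han (by exact_mod_cast hp)) (by positivity)
  exact h1.trans (Real.rpow_le_rpow_of_exponent_le hp1 ht)

lemma term_norm_le {p : ℕ} (hp : 0 < p) (j : ℕ) (c : ℂ) {C B : ℝ} (hB : 0 < B)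
    (hc : ‖c‖ ≤ C * 4 ^ j) {z : ℂ} (hz : B ≤ (p:ℝ) ^ z.re) :
    ‖c / (p : ℂ) ^ ((j : ℂ) * z)‖ ≤ C * (4 / B) ^ j := by
  have hC4 : (0:ℝ) ≤ C * 4 ^ j := le_trans (norm_nonneg c) hc
  rw [norm_div, norm_p_cpow hp]
  calc ‖c‖ / ((p:ℝ) ^ z.re) ^ j ≤ (C * 4 ^ j) / B ^ j := by
        apply div_le_div₀ hC4 hc (by positivity)
        exact pow_le_pow_left₀ hB.le hz j
    _ = C * (4 / B) ^ j := by rw [div_pow]; ring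

lemma series_analyticAt {p : ℕ} (hp : 257 ≤ p) (c : ℕ → ℂ) {C : ℝ}
    (hc : ∀ j, ‖c j‖ ≤ C * 4 ^ j) {s : ℂ} (hs : 1 / 2 ≤ s.re) :
    AnalyticAt ℂ (fun z => ∑' j : ℕ, c j / (p : ℂ) ^ ((j : ℂ) * z)) s := by
  have hp0 : 0 < p := by omega
  have hpc : ((p : ℂ)) ≠ 0 := by exact_mod_cast hp0.ne'
  set U : Set ℂ := Complex.re ⁻¹' Set.Ioi (1/3 : ℝ) with hU
  have hUopen : IsOpen U := (isOpen_Ioi).preimage Complex.continuous_re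
  have hdiff : DifferentiableOn ℂ (fun z => ∑' j : ℕ, c j / (p : ℂ) ^ ((j : ℂ) * z)) U := by
    apply differentiableOn_tsum_of_summable_norm
      (u := fun j => C * (4/6 : ℝ) ^ j)
    · apply Summable.mul_left
      exact summable_geometric_of_lt_one (by norm_num) (by norm_num)
    · intro j
      apply DifferentiableOn.div (differentiableOn_const _)
      · apply Differentiable.differentiableOn
        exact (differentiable_id.const_mul _).const_cpow (Or.inl hpc)
      · intro z _
        simp only [ne_eq, Complex.cpow_eq_zero_iff, not_and_or, not_not]
        exact Or.inl hpc
    · exact hUopen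
    · intro j w hw
      apply term_norm_le hp0 j _ (by norm_num) (hc j)
      apply base_ge hp (a := 6) (n := 3) (by norm_num) (by norm_num) (by norm_num)
      have : (1/3 : ℝ) < w.re := hw
      rw [show ((3:ℕ):ℝ) = 3 by norm_num]
      linarith
  apply hdiff.analyticAt
  apply hUopen.mem_nhds
  show (1/3 : ℝ) < s.re
  linarith

lemma series_summable {p : ℕ} (hp : 257 ≤ p) (c : ℕ → ℂ) {C : ℝ}
    (hc : ∀ j, ‖c j‖ ≤ C * 4 ^ j) {s : ℂ} (hs : 1 / 2 ≤ s.re) :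
    Summable (fun j : ℕ => c j / (p : ℂ) ^ ((j : ℂ) * s)) := by
  have hp0 : 0 < p := by omega
  have hbase : (16:ℝ) ≤ (p:ℝ) ^ s.re := by
    apply base_ge hp (a := 16) (n := 2) (by norm_num) (by norm_num) (by norm_num)
    rw [show ((2:ℕ):ℝ) = 2 by norm_num]; linarith
  apply Summable.of_norm_bounded (g := fun j => C * (4/16 : ℝ) ^ j)
  · exact Summable.mul_left _ (summable_geometric_of_lt_one (by norm_num) (by norm_num))
  · intro j
    exact term_norm_le hp0 j _ (by norm_num) (hc j) hbase

lemma series_norm_le {p : ℕ} (hp : 257 ≤ p) (c : ℕ → ℂ) {C : ℝ}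
    (hc : ∀ j, ‖c j‖ ≤ C * 4 ^ j) {s : ℂ} (hs : 1 / 2 ≤ s.re) :
    ‖∑' j : ℕ, c j / (p : ℂ) ^ ((j : ℂ) * s)‖ ≤ C * (4/3) := by
  have hp0 : 0 < p := by omega
  have hbase : (16:ℝ) ≤ (p:ℝ) ^ s.re := by
    apply base_ge hp (a := 16) (n := 2) (by norm_num) (by norm_num) (by norm_num)
    rw [show ((2:ℕ):ℝ) = 2 by norm_num]; linarith
  have hterm : ∀ j : ℕ, ‖c j / (p : ℂ) ^ ((j : ℂ) * s)‖ ≤ C * (4/16:ℝ) ^ j :=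
    fun j => term_norm_le hp0 j _ (by norm_num) (hc j) hbase
  have hsum : Summable (fun j : ℕ => C * (4/16:ℝ) ^ j) :=
    Summable.mul_left _ (summable_geometric_of_lt_one (by norm_num) (by norm_num))
  calc ‖∑' j : ℕ, c j / (p : ℂ) ^ ((j : ℂ) * s)‖
      ≤ ∑' j : ℕ, C * (4/16:ℝ) ^ j := tsum_of_norm_bounded hsum.hasSum hterm
    _ = C * (4/3) := by
        rw [tsum_mul_left, tsum_geometric_of_lt_one (by norm_num) (by norm_num)]
        norm_num

lemma series_sub_one_norm_le {p : ℕ} (hp : 257 ≤ p) (c : ℕ → ℂ)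
    (hc : ∀ j, ‖c j‖ ≤ (1:ℝ) * 4 ^ j) (hc0 : c 0 = 1) {s : ℂ} (hs : 1 / 2 ≤ s.re) :
    ‖(∑' j : ℕ, c j / (p : ℂ) ^ ((j : ℂ) * s)) - 1‖ ≤ 1/3 := by
  have hp0 : 0 < p := by omega
  have hbase : (16:ℝ) ≤ (p:ℝ) ^ s.re := by
    apply base_ge hp (a := 16) (n := 2) (by norm_num) (by norm_num) (by norm_num)
    rw [show ((2:ℕ):ℝ) = 2 by norm_num]; linarith
  have hsum := series_summable hp c hc hs
  rw [Summable.tsum_eq_zero_add hsum]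
  have h0 : c 0 / (p : ℂ) ^ (((0:ℕ) : ℂ) * s) = 1 := by
    simp [hc0]
  rw [h0]
  simp only [add_sub_cancel_left]
  have hterm : ∀ j : ℕ, ‖c (j+1) / (p : ℂ) ^ (((j+1 : ℕ) : ℂ) * s)‖ ≤ (1/4 : ℝ) * (4/16:ℝ) ^ j := by
    intro j
    have := term_norm_le hp0 (j+1) (c (j+1)) (C := 1) (by norm_num) (hc (j+1)) hbase
    calc ‖c (j+1) / (p : ℂ) ^ (((j+1 : ℕ) : ℂ) * s)‖ ≤ 1 * (4/16:ℝ) ^ (j+1) := this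
      _ = (1/4 : ℝ) * (4/16:ℝ) ^ j := by ring
  have hsum2 : Summable (fun j : ℕ => (1/4:ℝ) * (4/16:ℝ) ^ j) :=
    Summable.mul_left _ (summable_geometric_of_lt_one (by norm_num) (by norm_num))
  calc ‖∑' j : ℕ, c (j+1) / (p : ℂ) ^ (((j+1 : ℕ) : ℂ) * s)‖
      ≤ ∑' j : ℕ, (1/4:ℝ) * (4/16:ℝ) ^ j := tsum_of_norm_bounded hsum2.hasSum hterm
    _ = 1/3 := by
        rw [tsum_mul_left, tsum_geometric_of_lt_one (by norm_num) (by norm_num)]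
        norm_num

lemma rcoef_one (k : ℕ) (a : ℕ → ℂ) (h : a 1 = 1) : rcoef k a 1 = 1 := by
  simp [rcoef, h]

lemma card_divisors_pp {p : ℕ} (hp : p.Prime) (j : ℕ) :
    ((p ^ j).divisors.card : ℝ) = (j : ℝ) + 1 := by
  rw [Nat.divisors_prime_pow hp, Finset.card_map, Finset.card_range]
  push_cast; ring

lemma sq_succ_le_four_pow (j : ℕ) : ((j:ℝ) + 1) ^ 2 ≤ 4 ^ j := by
  induction j with
  | zero => norm_num
  | succ n ih =>
    have hn : (0:ℝ) ≤ n := n.cast_nonneg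
    push_cast
    calc ((n:ℝ) + 1 + 1) ^ 2 ≤ 4 * ((n:ℝ) + 1) ^ 2 := by nlinarith
      _ ≤ 4 * 4 ^ n := by linarith
      _ = 4 ^ (n + 1) := by ring

lemma tau6_eq_card (m : ℕ) (hm : m ≠ 0) :
    tau6 m = (Nat.finMulAntidiag 6 m).card := by
  have hset : {t : Fin 6 → ℕ | ∏ i, t i = m} = ↑(Nat.finMulAntidiag 6 m) := by
    ext t
    simp [Nat.mem_finMulAntidiag, hm]
  have h1 : tau6 m = Set.ncard {t : Fin 6 → ℕ | ∏ i, t i = m} :=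
    Nat.card_coe_set_eq _
  rw [h1, hset, Set.ncard_coe_finset]

lemma fact_prod_pow {m : ℕ} (S : Finset {x // x ∈ m.primeFactors})
    (e : {x // x ∈ m.primeFactors} → ℕ) {p : ℕ} (hp : p ∈ m.primeFactors) :
    (∏ q ∈ S, q.1 ^ e q).factorization p = if ⟨p, hp⟩ ∈ S then e ⟨p, hp⟩ else 0 := by
  classical
  have hne : ∀ q ∈ S, q.1 ^ e q ≠ 0 :=
    fun q _ => pow_ne_zero _ (Nat.prime_of_mem_primeFactors q.2).pos.ne'
  rw [Nat.factorization_prod hne, Finsupp.finset_sum_apply]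
  have hterm : ∀ q ∈ S, (q.1 ^ e q).factorization p = if q = ⟨p, hp⟩ then e q else 0 := by
    intro q _
    rw [Nat.Prime.factorization_pow (Nat.prime_of_mem_primeFactors q.2), Finsupp.single_apply]
    congr 1
    simp [Subtype.ext_iff]
  rw [Finset.sum_congr rfl hterm, Finset.sum_ite_eq' S ⟨p, hp⟩ e]

lemma prod_lower (m : ℕ) (hm : m ≠ 0) :
    ∏ p ∈ m.primeFactors, 2 * (m.factorization p + 1) ≤ (Nat.finMulAntidiag 6 m).card := by
  classical
  set P := m.primeFactors with hP
  set S : Finset ((p : ℕ) → p ∈ P → ℕ × ℕ) :=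
      P.pi (fun p => (range 2) ×ˢ (range (m.factorization p + 1))) with hS
  have hcardS : S.card = ∏ p ∈ P, 2 * (m.factorization p + 1) := by
    rw [hS, Finset.card_pi]
    exact Finset.prod_congr rfl fun p _ => by
      rw [Finset.card_product, Finset.card_range, Finset.card_range]
  let G : ((p : ℕ) → p ∈ P → ℕ × ℕ) → ℕ → (({x // x ∈ P}) → ℕ) → ℕ :=
    fun f b e => ∏ q ∈ P.attach.filter (fun q => (f q.1 q.2).1 = b), q.1 ^ e q
  let i_ : ((p : ℕ) → p ∈ P → ℕ × ℕ) → ({x // x ∈ P}) → ℕ := fun f q => (f q.1 q.2).2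
  let j_ : ((p : ℕ) → p ∈ P → ℕ × ℕ) → ({x // x ∈ P}) → ℕ :=
    fun f q => m.factorization q.1 - (f q.1 q.2).2
  let Φ : ((p : ℕ) → p ∈ P → ℕ × ℕ) → (Fin 6 → ℕ) :=
    fun f => ![G f 0 (i_ f), G f 0 (j_ f), G f 1 (i_ f), G f 1 (j_ f), 1, 1]
  have hmem : ∀ f ∈ S, ∀ p, (hp : p ∈ P) →
      (f p hp).1 < 2 ∧ (f p hp).2 ≤ m.factorization p := by
    intro f hf p hp
    have := (Finset.mem_pi.mp hf) p hp
    rw [Finset.mem_product, Finset.mem_range, Finset.mem_range] at this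
    omega
  have hΦmem : ∀ f ∈ S, Φ f ∈ Nat.finMulAntidiag 6 m := by
    intro f hf
    rw [Nat.mem_finMulAntidiag]
    refine ⟨?_, hm⟩
    rw [Fin.prod_univ_six]
    show G f 0 (i_ f) * G f 0 (j_ f) * G f 1 (i_ f) * G f 1 (j_ f) * 1 * 1 = m
    have key : ∀ b, G f b (i_ f) * G f b (j_ f) =
        ∏ q ∈ P.attach.filter (fun q => (f q.1 q.2).1 = b), q.1 ^ m.factorization q.1 := by
      intro b
      rw [show G f b (i_ f) * G f b (j_ f) = ∏ q ∈ P.attach.filter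
        (fun q => (f q.1 q.2).1 = b), (q.1 ^ i_ f q * q.1 ^ j_ f q) from
        (Finset.prod_mul_distrib).symm]
      refine Finset.prod_congr rfl fun q hq => ?_
      rw [← pow_add]
      congr 1
      have := (hmem f hf q.1 q.2).2
      simp only [i_, j_]
      omega
    have hsplit : (∏ q ∈ P.attach.filter (fun q => (f q.1 q.2).1 = 0),
          q.1 ^ m.factorization q.1) *
        (∏ q ∈ P.attach.filter (fun q => (f q.1 q.2).1 = 1), q.1 ^ m.factorization q.1) =
        ∏ q ∈ P.attach, q.1 ^ m.factorization q.1 := by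
      rw [← Finset.prod_filter_mul_prod_filter_not P.attach (fun q => (f q.1 q.2).1 = 0)]
      congr 1
      apply Finset.prod_congr _ fun _ _ => rfl
      ext q
      simp only [Finset.mem_filter, Finset.mem_attach, true_and]
      have := (hmem f hf q.1 q.2).1
      omega
    have hm' : ∏ q ∈ P.attach, q.1 ^ m.factorization q.1 = m := by
      rw [Finset.prod_attach P (fun p => p ^ m.factorization p)]
      rw [hP, ← Nat.prod_factorization_eq_prod_primeFactors]
      exact Nat.factorization_prod_pow_eq_self hm
    calc G f 0 (i_ f) * G f 0 (j_ f) * G f 1 (i_ f) * G f 1 (j_ f) * 1 * 1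
        = (G f 0 (i_ f) * G f 0 (j_ f)) * (G f 1 (i_ f) * G f 1 (j_ f)) := by ring
      _ = m := by rw [key 0, key 1, hsplit, hm']
  have hval : ∀ f b e p, (hp : p ∈ P) →
      (G f b e).factorization p = if (f p hp).1 = b then e ⟨p, hp⟩ else 0 := by
    intro f b e p hp
    rw [show G f b e = ∏ q ∈ P.attach.filter (fun q => (f q.1 q.2).1 = b), q.1 ^ e q from rfl]
    rw [fact_prod_pow _ _ hp]
    simp [Finset.mem_filter]
  have hinj : Set.InjOn Φ S := by
    intro f hf g hg hfg
    funext p hp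
    have hα : 1 ≤ m.factorization p := by
      have hp' : p ∈ m.factorization.support := by
        rw [Nat.support_factorization]; exact hp
      exact Nat.pos_of_ne_zero (Finsupp.mem_support_iff.mp hp')
    have h0 := congrArg (fun t => (t 0).factorization p) hfg
    have h1 := congrArg (fun t => (t 1).factorization p) hfg
    have h2 := congrArg (fun t => (t 2).factorization p) hfg
    have h3 := congrArg (fun t => (t 3).factorization p) hfg
    simp only [Φ, Matrix.cons_val_zero, Matrix.cons_val_one, Matrix.head_cons,
      Matrix.cons_val_two, Matrix.tail_cons, Matrix.cons_val_three] at h0 h1 h2 h3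
    rw [hval f 0 (i_ f) p hp, hval g 0 (i_ g) p hp] at h0
    rw [hval f 0 (j_ f) p hp, hval g 0 (j_ g) p hp] at h1
    rw [hval f 1 (i_ f) p hp, hval g 1 (i_ g) p hp] at h2
    rw [hval f 1 (j_ f) p hp, hval g 1 (j_ g) p hp] at h3
    have hbf := (hmem f hf p hp).1
    have hbg := (hmem g hg p hp).1
    have hif := (hmem f hf p hp).2
    have hig := (hmem g hg p hp).2
    simp only [i_, j_] at h0 h1 h2 h3
    have : (f p hp).1 = (g p hp).1 ∧ (f p hp).2 = (g p hp).2 := by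
      have hbf' : (f p hp).1 = 0 ∨ (f p hp).1 = 1 := by omega
      have hbg' : (g p hp).1 = 0 ∨ (g p hp).1 = 1 := by omega
      rcases hbf' with hf1 | hf1 <;> rcases hbg' with hg1 | hg1 <;>
        simp [hf1, hg1] at h0 h1 h2 h3 ⊢ <;> omega
    exact Prod.ext this.1 this.2
  calc ∏ p ∈ P, 2 * (m.factorization p + 1) = S.card := hcardS.symm
    _ ≤ (Nat.finMulAntidiag 6 m).card := Finset.card_le_card_of_injOn Φ hΦmem hinj

end Aux

/-- estimate (12). For `m` with all prime factors `> 256`, `K(m, ·)` is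
analytic in the half-plane `Re s ≥ 1/2` and satisfies `|K(m,s)| ≤ τ₆(m)` there. -/
theorem K_analytic_and_bounded (F : CuspFormData) (m : ℕ) (hm : 0 < m)
    (hp : ∀ p ∈ m.primeFactors, 256 < p) :
    (∀ s : ℂ, 1 / 2 ≤ s.re → AnalyticAt ℂ (fun z => Kfun (rcoef F.k F.a) m z) s) ∧
    (∀ s : ℂ, 1 / 2 ≤ s.re → ‖Kfun (rcoef F.k F.a) m s‖ ≤ (tau6 m : ℝ)) := by
  classical
  set r := rcoef F.k F.a with hr
  have hrb : ∀ p : ℕ, p.Prime → ∀ j : ℕ, ‖r (p ^ j)‖ ≤ (j : ℝ) + 1 := by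
    intro p hpp j
    have h1 : 1 ≤ p ^ j := Nat.one_le_iff_ne_zero.mpr (pow_ne_zero _ hpp.pos.ne')
    have := F.ramanujan (p ^ j) h1
    rwa [card_divisors_pp hpp j] at this
  have hp257 : ∀ p ∈ m.primeFactors, 257 ≤ p := fun p h => by have := hp p h; omega
  set cA : ℕ → ℕ → ℂ := fun p j => ((‖r (p ^ j)‖ ^ 2 : ℝ) : ℂ) with hcA
  set cB : ℕ → ℕ → ℂ :=
    fun p j => conj (r (p ^ (m.factorization p + j))) * r (p ^ j) with hcB
  have hcAb : ∀ p ∈ m.primeFactors, ∀ j, ‖cA p j‖ ≤ (1:ℝ) * 4 ^ j := by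
    intro p hpm j
    have hpp := Nat.prime_of_mem_primeFactors hpm
    have h1 := hrb p hpp j
    have h2 : ‖cA p j‖ = ‖r (p ^ j)‖ ^ 2 := by
      rw [hcA, Complex.norm_real]
      exact abs_of_nonneg (by positivity)
    rw [h2, one_mul]
    calc ‖r (p ^ j)‖ ^ 2 ≤ ((j:ℝ)+1) ^ 2 := by nlinarith [norm_nonneg (r (p ^ j))]
      _ ≤ 4 ^ j := sq_succ_le_four_pow j
  have hcA0 : ∀ p, cA p 0 = 1 := by
    intro p
    rw [hcA]
    simp only [pow_zero]
    rw [hr, rcoef_one F.k F.a F.a_one]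
    norm_num
  have hcBb : ∀ p ∈ m.primeFactors, ∀ j,
      ‖cB p j‖ ≤ ((m.factorization p : ℝ) + 1) * 4 ^ j := by
    intro p hpm j
    have hpp := Nat.prime_of_mem_primeFactors hpm
    have h1 := hrb p hpp (m.factorization p + j)
    have h2 := hrb p hpp j
    have h3 : ‖cB p j‖ = ‖r (p ^ (m.factorization p + j))‖ * ‖r (p ^ j)‖ := by
      rw [hcB]
      simp
    rw [h3]
    set α : ℝ := (m.factorization p : ℝ) with hα
    have hα0 : 0 ≤ α := Nat.cast_nonneg _
    have hj0 : (0:ℝ) ≤ (j:ℝ) := Nat.cast_nonneg _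
    have hcast : ((m.factorization p + j : ℕ) : ℝ) = α + j := by push_cast; ring
    rw [hcast] at h1
    have hb1 : ‖r (p ^ (m.factorization p + j))‖ * ‖r (p ^ j)‖ ≤ (α + j + 1) * ((j:ℝ) + 1) := by
      apply mul_le_mul h1 h2 (norm_nonneg _) (by positivity)
    have hb2 : (α + j + 1) * ((j:ℝ) + 1) ≤ (α + 1) * ((j:ℝ) + 1) ^ 2 := by
      nlinarith [mul_nonneg (mul_nonneg hα0 hj0) (by linarith : (0:ℝ) ≤ (j:ℝ) + 1)]
    have hb3 : (α + 1) * ((j:ℝ) + 1) ^ 2 ≤ (α + 1) * 4 ^ j := by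
      have := sq_succ_le_four_pow j
      nlinarith
    linarith
  have hAfacts : ∀ p ∈ m.primeFactors, ∀ s : ℂ, 1/2 ≤ s.re →
      (∑' j : ℕ, cA p j / (p:ℂ) ^ ((j:ℂ) * s)) ≠ 0 ∧
      ‖(∑' j : ℕ, cA p j / (p:ℂ) ^ ((j:ℂ) * s))⁻¹‖ ≤ 3/2 := by
    intro p hpm s hs
    have hsub := series_sub_one_norm_le (hp257 p hpm) (cA p) (hcAb p hpm) (hcA0 p) hs
    set A := ∑' j : ℕ, cA p j / (p:ℂ) ^ ((j:ℂ) * s) with hA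
    have hlow : (2/3:ℝ) ≤ ‖A‖ := by
      have h1 : ‖(1:ℂ)‖ - ‖A‖ ≤ ‖(1:ℂ) - A‖ := norm_sub_norm_le _ _
      rw [norm_sub_rev] at h1
      rw [norm_one] at h1
      linarith
    have hne : A ≠ 0 := by
      intro h
      rw [h, norm_zero] at hlow
      linarith
    refine ⟨hne, ?_⟩
    rw [norm_inv]
    rw [inv_le_comm₀ (by linarith) (by norm_num)]
    linarith
  constructor
  · intro s hs
    show AnalyticAt ℂ (fun z =>
      (∏ p ∈ m.primeFactors, (∑' j : ℕ, cA p j / (p:ℂ) ^ ((j:ℂ) * z))⁻¹) *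
      ∏ p ∈ m.primeFactors, ∑' j : ℕ, cB p j / (p:ℂ) ^ ((j:ℂ) * z)) s
    apply AnalyticAt.mul
    · apply Finset.analyticAt_fun_prod
      intro p hpm
      exact (series_analyticAt (hp257 p hpm) (cA p) (hcAb p hpm) hs).inv
        (hAfacts p hpm s hs).1
    · apply Finset.analyticAt_fun_prod
      intro p hpm
      exact series_analyticAt (hp257 p hpm) (cB p) (hcBb p hpm) hs
  · intro s hs
    have hKrw : Kfun r m s = ∏ p ∈ m.primeFactors,
        ((∑' j : ℕ, cA p j / (p:ℂ) ^ ((j:ℂ) * s))⁻¹ *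
          ∑' j : ℕ, cB p j / (p:ℂ) ^ ((j:ℂ) * s)) := by
      rw [Finset.prod_mul_distrib]
      rfl
    rw [hKrw, norm_prod]
    have hfac : ∀ p ∈ m.primeFactors,
        ‖(∑' j : ℕ, cA p j / (p:ℂ) ^ ((j:ℂ) * s))⁻¹ *
          ∑' j : ℕ, cB p j / (p:ℂ) ^ ((j:ℂ) * s)‖ ≤ 2 * ((m.factorization p : ℝ) + 1) := by
      intro p hpm
      rw [norm_mul]
      have h1 := (hAfacts p hpm s hs).2
      have h2 := series_norm_le (hp257 p hpm) (cB p) (hcBb p hpm) hs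
      calc ‖(∑' j : ℕ, cA p j / (p:ℂ) ^ ((j:ℂ) * s))⁻¹‖ *
            ‖∑' j : ℕ, cB p j / (p:ℂ) ^ ((j:ℂ) * s)‖
          ≤ (3/2) * (((m.factorization p : ℝ) + 1) * (4/3)) := by
            apply mul_le_mul h1 h2 (norm_nonneg _) (by norm_num)
        _ = 2 * ((m.factorization p : ℝ) + 1) := by ring
    calc ∏ p ∈ m.primeFactors, ‖(∑' j : ℕ, cA p j / (p:ℂ) ^ ((j:ℂ) * s))⁻¹ *
            ∑' j : ℕ, cB p j / (p:ℂ) ^ ((j:ℂ) * s)‖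
        ≤ ∏ p ∈ m.primeFactors, (2 * ((m.factorization p : ℝ) + 1)) :=
          Finset.prod_le_prod (fun p _ => norm_nonneg _) hfac
      _ = ((∏ p ∈ m.primeFactors, 2 * (m.factorization p + 1) : ℕ) : ℝ) := by
          rw [Nat.cast_prod]
          exact (Finset.prod_congr rfl fun p _ => by push_cast; ring).symm
      _ ≤ (tau6 m : ℝ) := by
          have := (prod_lower m hm.ne').trans_eq (tau6_eq_card m hm.ne').symm
          exact_mod_cast this
end
end
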